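/- arXiv:2306.13673 — 4 statements merged into one kernel-verified Lean document; each statement's English description precedes it below -/
import Mathlib

section
/- Let A be a finite set of actions of size k over facilities F, ω a probability distribution on A with q(f) = ∑_{a∋f} ω(a), a* ∼ ω, and R(f) ∈ [0,1]. Define ỹ(f) = 1 − 𝟙{f∈a*}(1−R(f))/q(f) for q(f) > 0 (and ỹ(f) arbitrary, say 1, when q(f)=0). Then E_{a*∼ω}[ ∑_{a∈A} ω(a) (∑_{f∈a} ỹ(f))² ] ≤ k + k|F|. -/
theorem facility_estimator_variance_bound {β : Type*} [DecidableEq β]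
    (F : Finset β) (A : Finset (Finset β)) (k : ℕ)
    (hA : ∀ a ∈ A, a ⊆ F) (hcard : ∀ a ∈ A, a.card = k)
    (ω : Finset β → ℝ) (hω : ∀ a ∈ A, 0 ≤ ω a) (hsum : ∑ a ∈ A, ω a = 1)
    (R : β → ℝ) (hR : ∀ f ∈ F, R f ∈ Set.Icc (0 : ℝ) 1)
    (q : β → ℝ) (hq : ∀ f, q f = ∑ a ∈ A.filter (fun a => f ∈ a), ω a)
    (y : Finset β → β → ℝ)
    (hy : ∀ astar f, y astar f = if q f = 0 then 1 else
      1 - (if f ∈ astar then (1 : ℝ) else 0) * (1 - R f) / q f) :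
    ∑ astar ∈ A, ω astar * ∑ a ∈ A, ω a * (∑ f ∈ a, y astar f) ^ 2
      ≤ (k : ℝ) + (k : ℝ) * (F.card : ℝ) := by
  classical
  set z : Finset β → β → ℝ := fun astar f =>
    if q f = 0 then 0 else (if f ∈ astar then (1 : ℝ) else 0) * (1 - R f) / q f with hz
  set c1 : β → ℝ := fun f => if q f = 0 then 0 else 1 - R f with hc1
  set c2 : β → ℝ := fun f => if q f = 0 then 0 else (1 - R f) ^ 2 / q f with hc2
  have hq0 : ∀ f, 0 ≤ q f := by
    intro f
    rw [hq]
    exact Finset.sum_nonneg fun a ha => hω a (Finset.mem_filter.mp ha).1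
  have hq1 : ∀ f, q f ≤ 1 := by
    intro f
    rw [hq, ← hsum]
    exact Finset.sum_le_sum_of_subset_of_nonneg (Finset.filter_subset _ _)
      (fun a ha _ => hω a ha)
  have hqif : ∀ f, q f = ∑ a ∈ A, if f ∈ a then ω a else 0 := by
    intro f
    rw [hq, Finset.sum_filter]
  -- swap lemma
  have swap : ∀ c : β → ℝ, ∑ a ∈ A, ω a * ∑ f ∈ a, c f = ∑ f ∈ F, q f * c f := by
    intro c
    have h1 : ∀ a ∈ A, ω a * ∑ f ∈ a, c f = ∑ f ∈ F, (if f ∈ a then ω a * c f else 0) := by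
      intro a ha
      rw [Finset.mul_sum, ← Finset.sum_filter]
      congr 1
      rw [Finset.filter_mem_eq_inter, Finset.inter_eq_right.mpr (hA a ha)]
    rw [Finset.sum_congr rfl h1, Finset.sum_comm]
    refine Finset.sum_congr rfl fun f _ => ?_
    rw [hqif f, Finset.sum_mul]
    refine Finset.sum_congr rfl fun a _ => ?_
    split_ifs <;> ring
  have hqsum : ∑ f ∈ F, q f = (k : ℝ) := by
    calc ∑ f ∈ F, q f = ∑ f ∈ F, q f * 1 := by simp
      _ = ∑ a ∈ A, ω a * ∑ f ∈ a, (1 : ℝ) := (swap _).symm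
      _ = ∑ a ∈ A, ω a * k := by
          refine Finset.sum_congr rfl fun a ha => ?_
          rw [Finset.sum_const, hcard a ha, nsmul_eq_mul, mul_one]
      _ = (k : ℝ) := by rw [← Finset.sum_mul, hsum, one_mul]
  -- expectations over astar
  have hEz : ∀ f, ∑ astar ∈ A, ω astar * z astar f = c1 f := by
    intro f
    by_cases hf : q f = 0
    · simp [hz, hc1, hf]
    · simp only [hz, hc1, if_neg hf]
      have : ∀ astar ∈ A, ω astar * ((if f ∈ astar then (1 : ℝ) else 0) * (1 - R f) / q f)
          = (if f ∈ astar then ω astar else 0) * ((1 - R f) / q f) := by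
        intro astar _
        split_ifs <;> ring
      rw [Finset.sum_congr rfl this, ← Finset.sum_mul, ← hqif f]
      field_simp
  have hEz2 : ∀ f, ∑ astar ∈ A, ω astar * (z astar f) ^ 2 = c2 f := by
    intro f
    by_cases hf : q f = 0
    · simp [hz, hc2, hf]
    · simp only [hz, hc2, if_neg hf]
      have : ∀ astar ∈ A, ω astar * ((if f ∈ astar then (1 : ℝ) else 0) * (1 - R f) / q f) ^ 2
          = (if f ∈ astar then ω astar else 0) * ((1 - R f) ^ 2 / q f ^ 2) := by
        intro astar _
        split_ifs <;> ring
      rw [Finset.sum_congr rfl this, ← Finset.sum_mul, ← hqif f]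
      field_simp
  -- pointwise bound via Cauchy-Schwarz
  have step1 : ∀ astar ∈ A, ∀ a ∈ A, (∑ f ∈ a, y astar f) ^ 2
      ≤ (k : ℝ) ^ 2 - 2 * k * (∑ f ∈ a, z astar f) + k * ∑ f ∈ a, (z astar f) ^ 2 := by
    intro astar _ a ha
    have hyz : ∀ f, y astar f = 1 - z astar f := by
      intro f
      rw [hy]
      simp only [hz]
      split_ifs <;> ring
    have hT : ∑ f ∈ a, y astar f = (k : ℝ) - ∑ f ∈ a, z astar f := by
      rw [Finset.sum_congr rfl fun f _ => hyz f, Finset.sum_sub_distrib,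
        Finset.sum_const, hcard a ha, nsmul_eq_mul, mul_one]
    rw [hT]
    have CS : (∑ f ∈ a, z astar f) ^ 2 ≤ (a.card : ℝ) * ∑ f ∈ a, (z astar f) ^ 2 :=
      sq_sum_le_card_mul_sum_sq (s := a) (f := fun f => z astar f)
    rw [hcard a ha] at CS
    nlinarith [CS]
  -- bound the LHS by the expanded expression
  have step2 : ∑ astar ∈ A, ω astar * ∑ a ∈ A, ω a * (∑ f ∈ a, y astar f) ^ 2
      ≤ ∑ astar ∈ A, ω astar * ∑ a ∈ A, ω a *
        ((k : ℝ) ^ 2 - 2 * k * (∑ f ∈ a, z astar f) + k * ∑ f ∈ a, (z astar f) ^ 2) := by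
    refine Finset.sum_le_sum fun astar hastar => ?_
    refine mul_le_mul_of_nonneg_left ?_ (hω astar hastar)
    refine Finset.sum_le_sum fun a ha => ?_
    exact mul_le_mul_of_nonneg_left (step1 astar hastar a ha) (hω a ha)
  -- compute the expanded expression
  have step3 : ∑ astar ∈ A, ω astar * ∑ a ∈ A, ω a *
        ((k : ℝ) ^ 2 - 2 * k * (∑ f ∈ a, z astar f) + k * ∑ f ∈ a, (z astar f) ^ 2)
      = (k : ℝ) ^ 2 - 2 * k * (∑ f ∈ F, q f * c1 f) + k * (∑ f ∈ F, q f * c2 f) := by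
    have comm : ∑ astar ∈ A, ω astar * ∑ a ∈ A, ω a *
          ((k : ℝ) ^ 2 - 2 * k * (∑ f ∈ a, z astar f) + k * ∑ f ∈ a, (z astar f) ^ 2)
        = ∑ a ∈ A, ω a * ∑ astar ∈ A, ω astar *
          ((k : ℝ) ^ 2 - 2 * k * (∑ f ∈ a, z astar f) + k * ∑ f ∈ a, (z astar f) ^ 2) := by
      simp only [Finset.mul_sum]
      rw [Finset.sum_comm]
      refine Finset.sum_congr rfl fun a _ => Finset.sum_congr rfl fun astar _ => by ring
    rw [comm]
    have inner : ∀ a ∈ A, ∑ astar ∈ A, ω astar *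
          ((k : ℝ) ^ 2 - 2 * k * (∑ f ∈ a, z astar f) + k * ∑ f ∈ a, (z astar f) ^ 2)
        = (k : ℝ) ^ 2 - 2 * k * (∑ f ∈ a, c1 f) + k * ∑ f ∈ a, c2 f := by
      intro a _
      have expand : ∀ astar ∈ A, ω astar *
            ((k : ℝ) ^ 2 - 2 * k * (∑ f ∈ a, z astar f) + k * ∑ f ∈ a, (z astar f) ^ 2)
          = ω astar * (k : ℝ) ^ 2 - 2 * k * (∑ f ∈ a, ω astar * z astar f)
            + k * ∑ f ∈ a, ω astar * (z astar f) ^ 2 := by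
        intro astar _
        rw [show (∑ f ∈ a, ω astar * z astar f) = ω astar * ∑ f ∈ a, z astar f from
            (Finset.mul_sum _ _ _).symm,
          show (∑ f ∈ a, ω astar * (z astar f) ^ 2) = ω astar * ∑ f ∈ a, (z astar f) ^ 2 from
            (Finset.mul_sum _ _ _).symm]
        ring
      rw [Finset.sum_congr rfl expand, Finset.sum_add_distrib, Finset.sum_sub_distrib]
      rw [← Finset.sum_mul, hsum, one_mul]
      congr 1
      · congr 1
        rw [← Finset.mul_sum]
        congr 1
        rw [Finset.sum_comm]
        exact Finset.sum_congr rfl fun f _ => hEz f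
      · rw [← Finset.mul_sum]
        congr 1
        rw [Finset.sum_comm]
        exact Finset.sum_congr rfl fun f _ => hEz2 f
    have inner' : ∀ a ∈ A, ω a * ∑ astar ∈ A, ω astar *
          ((k : ℝ) ^ 2 - 2 * k * (∑ f ∈ a, z astar f) + k * ∑ f ∈ a, (z astar f) ^ 2)
        = ω a * ((k : ℝ) ^ 2 - 2 * k * (∑ f ∈ a, c1 f) + k * ∑ f ∈ a, c2 f) := by
      intro a ha
      rw [inner a ha]
    rw [Finset.sum_congr rfl inner']
    have expand2 : ∀ a ∈ A, ω a * ((k : ℝ) ^ 2 - 2 * k * (∑ f ∈ a, c1 f) + k * ∑ f ∈ a, c2 f)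
        = ω a * (k : ℝ) ^ 2 - 2 * k * (ω a * ∑ f ∈ a, c1 f) + k * (ω a * ∑ f ∈ a, c2 f) := by
      intro a _
      ring
    rw [Finset.sum_congr rfl expand2, Finset.sum_add_distrib, Finset.sum_sub_distrib,
      ← Finset.sum_mul, hsum, one_mul, ← Finset.mul_sum, ← Finset.mul_sum,
      swap c1, swap c2]
  rw [step3] at step2
  -- per-facility bound
  have perf : ∀ f ∈ F, q f * c2 f - 2 * (q f * c1 f) ≤ 1 - q f := by
    intro f hf
    obtain ⟨hR0, hR1⟩ := hR f hf
    by_cases hfq : q f = 0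
    · simp [hc1, hc2, hfq]
    · simp only [hc1, hc2, if_neg hfq]
      have hqpos : 0 < q f := lt_of_le_of_ne (hq0 f) (Ne.symm hfq)
      rw [mul_div_cancel₀ _ hfq]
      nlinarith [hq1 f, hq0 f]
  have final : (k : ℝ) ^ 2 - 2 * k * (∑ f ∈ F, q f * c1 f) + k * (∑ f ∈ F, q f * c2 f)
      ≤ (k : ℝ) + (k : ℝ) * F.card := by
    have hksum : ∑ f ∈ F, (q f * c2 f - 2 * (q f * c1 f)) ≤ ∑ f ∈ F, (1 - q f) :=
      Finset.sum_le_sum perf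
    rw [Finset.sum_sub_distrib] at hksum
    have h2 : ∑ f ∈ F, (1 - q f) = (F.card : ℝ) - k := by
      rw [Finset.sum_sub_distrib, Finset.sum_const, hqsum, nsmul_eq_mul, mul_one]
    rw [h2] at hksum
    rw [show (∑ x ∈ F, 2 * (q x * c1 x)) = 2 * ∑ x ∈ F, q x * c1 x from
        (Finset.mul_sum _ _ _).symm] at hksum
    have hk0 : (0 : ℝ) ≤ k := Nat.cast_nonneg k
    nlinarith [mul_le_mul_of_nonneg_left hksum hk0]
  linarith [step2, final]
end

section
/- Let w : F → ℝ_{>0} assign positive weights to a finite facility set F ordered so that w(f_1) ≥ w(f_2) ≥ ⋯ ≥ w(f_|F|), let k ≤ |F|, let A be the collection of all k-element subsets of F, and let a* = {f_1,…,f_k}. Then ∏_{f∈a*} w(f) / ∑_{a∈A} ∏_{f∈a} w(f) ≥ ∏_{m=1}^{k} w(f_m) / (w(f_m) + ∑_{ℓ>k} w(f_ℓ)). -/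
open Finset

/-- Elementary symmetric sum is at most the power of the total sum (nonneg weights). -/
lemma esymm_le_pow (w : ℕ → ℝ) (L : Finset ℕ) (hL : ∀ i ∈ L, 0 ≤ w i) :
    ∀ j, ∑ b ∈ L.powersetCard j, ∏ f ∈ b, w f ≤ (∑ ℓ ∈ L, w ℓ) ^ j := by
  classical
  induction L using Finset.induction_on with
  | empty =>
      intro j
      cases j with
      | zero => simp
      | succ j =>
          rw [Finset.powersetCard_eq_empty.2 (by simp)]
          simp
  | @insert a s ha ih =>
      have hs : ∀ i ∈ s, 0 ≤ w i := fun i hi => hL i (mem_insert_of_mem hi)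
      have hwa : 0 ≤ w a := hL a (mem_insert_self a s)
      have hSs : 0 ≤ ∑ ℓ ∈ s, w ℓ := Finset.sum_nonneg hs
      intro j
      cases j with
      | zero => simp
      | succ j =>
          rw [Finset.powersetCard_succ_insert ha]
          have hdisj : Disjoint (s.powersetCard (j+1))
              ((s.powersetCard j).image (insert a)) := by
            rw [Finset.disjoint_left]
            intro b hb hb'
            simp only [Finset.mem_image] at hb'
            obtain ⟨c, hc, rfl⟩ := hb'
            exact ha ((Finset.mem_powersetCard.1 hb).1 (Finset.mem_insert_self a c))
          rw [Finset.sum_union hdisj]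
          have hinj : Set.InjOn (insert a) (s.powersetCard j : Set (Finset ℕ)) := by
            intro b hb c hc h
            simp only [Finset.mem_coe, Finset.mem_powersetCard] at hb hc
            have hab : a ∉ b := fun h' => ha (hb.1 h')
            have hac : a ∉ c := fun h' => ha (hc.1 h')
            rw [← Finset.erase_insert hab, ← Finset.erase_insert hac, h]
          rw [Finset.sum_image fun b hb c hc h => hinj hb hc h]
          have h1 : ∑ b ∈ s.powersetCard (j+1), ∏ f ∈ b, w f ≤ (∑ ℓ ∈ s, w ℓ) ^ (j+1) :=
            ih hs (j+1)
          have h2 : ∑ b ∈ s.powersetCard j, ∏ f ∈ insert a b, w f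
              ≤ w a * (∑ ℓ ∈ s, w ℓ) ^ j := by
            have : ∀ b ∈ s.powersetCard j, ∏ f ∈ insert a b, w f = w a * ∏ f ∈ b, w f := by
              intro b hb
              have hab : a ∉ b := fun h' => ha ((Finset.mem_powersetCard.1 hb).1 h')
              rw [Finset.prod_insert hab]
            rw [Finset.sum_congr rfl this, ← Finset.mul_sum]
            exact mul_le_mul_of_nonneg_left (ih hs j) hwa
          rw [Finset.sum_insert ha]
          calc ∑ b ∈ s.powersetCard (j+1), ∏ f ∈ b, w f
                + ∑ b ∈ s.powersetCard j, ∏ f ∈ insert a b, w f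
              ≤ (∑ ℓ ∈ s, w ℓ) ^ (j+1) + w a * (∑ ℓ ∈ s, w ℓ) ^ j := add_le_add h1 h2
            _ ≤ (w a + ∑ ℓ ∈ s, w ℓ) ^ (j+1) := by
                rw [pow_succ (w a + ∑ ℓ ∈ s, w ℓ) j]
                calc (∑ ℓ ∈ s, w ℓ) ^ (j+1) + w a * (∑ ℓ ∈ s, w ℓ) ^ j
                    = (∑ ℓ ∈ s, w ℓ) ^ j * (w a + ∑ ℓ ∈ s, w ℓ) := by ring
                  _ ≤ (w a + ∑ ℓ ∈ s, w ℓ) ^ j * (w a + ∑ ℓ ∈ s, w ℓ) := by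
                      apply mul_le_mul_of_nonneg_right
                      · exact pow_le_pow_left₀ hSs (by linarith) j
                      · linarith

theorem exp_weights_product_lower_bound (n k : ℕ) (hk : k ≤ n)
    (w : ℕ → ℝ) (hw : ∀ i < n, 0 < w i)
    (hmono : ∀ i j, i ≤ j → j < n → w j ≤ w i) :
    (∏ f ∈ Finset.range k, w f) /
        (∑ a ∈ (Finset.range n).powersetCard k, ∏ f ∈ a, w f)
      ≥ ∏ m ∈ Finset.range k,
          w m / (w m + ∑ ℓ ∈ (Finset.range n).filter (fun ℓ => k ≤ ℓ), w ℓ) := by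
  classical
  set L : Finset ℕ := (Finset.range n).filter (fun ℓ => k ≤ ℓ) with hLdef
  set S : ℝ := ∑ ℓ ∈ L, w ℓ with hSdef
  have hLnonneg : ∀ i ∈ L, 0 ≤ w i := by
    intro i hi
    exact (hw i (Finset.mem_range.1 (Finset.mem_filter.1 hi).1)).le
  have hS : 0 ≤ S := Finset.sum_nonneg hLnonneg
  have hwk : ∀ m ∈ Finset.range k, 0 < w m := fun m hm =>
    hw m (lt_of_lt_of_le (Finset.mem_range.1 hm) hk)
  -- Key inequality: sum over k-subsets ≤ ∏_{m<k} (w m + S)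
  have key : ∑ a ∈ (Finset.range n).powersetCard k, ∏ f ∈ a, w f
      ≤ ∏ m ∈ Finset.range k, (w m + S) := by
    rw [Finset.prod_add]
    -- group the subsets a by T = a ∩ range k
    rw [← Finset.sum_fiberwise_of_maps_to (g := fun a => a ∩ Finset.range k)
        (t := (Finset.range k).powerset)
        (fun a _ => Finset.mem_powerset.2 (Finset.inter_subset_right))]
    apply Finset.sum_le_sum
    intro T hT
    have hTsub : T ⊆ Finset.range k := Finset.mem_powerset.1 hT
    -- for a in the fiber: a = T ∪ (a \ range k), disjoint
    have fiber_eq : ∀ a ∈ ((Finset.range n).powersetCard k).filter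
        (fun a => a ∩ Finset.range k = T),
        ∏ f ∈ a, w f = (∏ f ∈ T, w f) * ∏ f ∈ a \ Finset.range k, w f := by
      intro a ha
      obtain ⟨ha1, ha2⟩ := Finset.mem_filter.1 ha
      have : a = T ∪ (a \ Finset.range k) := by
        rw [← ha2]; ext x
        simp only [Finset.mem_union, Finset.mem_inter, Finset.mem_sdiff]
        tauto
      rw [← Finset.prod_union (by
        rw [Finset.disjoint_left]; intro x hx hx'
        exact (Finset.mem_sdiff.1 hx').2 (hTsub hx)), ← this]
    rw [Finset.sum_congr rfl fiber_eq, ← Finset.mul_sum]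
    apply mul_le_mul_of_nonneg_left _ (Finset.prod_nonneg fun m hm => (hw m
      (lt_of_lt_of_le (Finset.mem_range.1 (hTsub hm)) hk)).le)
    -- remaining sum ≤ S ^ (k - T.card) = ∏_{m ∈ range k \ T} S
    have card_eq : (Finset.range k \ T).card = k - T.card := by
      rw [Finset.card_sdiff_of_subset hTsub, Finset.card_range]
    rw [Finset.prod_const, card_eq]
    calc ∑ a ∈ ((Finset.range n).powersetCard k).filter
          (fun a => a ∩ Finset.range k = T), ∏ f ∈ a \ Finset.range k, w f
        ≤ ∑ b ∈ L.powersetCard (k - T.card), ∏ f ∈ b, w f := by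
          set fib := ((Finset.range n).powersetCard k).filter
            (fun a => a ∩ Finset.range k = T) with hfibdef
          have hinj : ∀ a ∈ fib, ∀ b ∈ fib,
              a \ Finset.range k = b \ Finset.range k → a = b := by
            intro a ha b hb hab
            simp only [hfibdef, Finset.mem_filter] at ha hb
            have ea : a = (a ∩ Finset.range k) ∪ (a \ Finset.range k) := by
              ext x; simp only [Finset.mem_union, Finset.mem_inter, Finset.mem_sdiff]; tauto
            have eb : b = (b ∩ Finset.range k) ∪ (b \ Finset.range k) := by
              ext x; simp only [Finset.mem_union, Finset.mem_inter, Finset.mem_sdiff]; tauto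
            rw [ea, eb, ha.2, hb.2, hab]
          have himg : ∑ b ∈ fib.image (fun a => a \ Finset.range k), ∏ f ∈ b, w f
              = ∑ a ∈ fib, ∏ f ∈ a \ Finset.range k, w f := Finset.sum_image hinj
          rw [← himg]
          apply Finset.sum_le_sum_of_subset_of_nonneg
          · intro b hb
            simp only [Finset.mem_image, hfibdef, Finset.mem_filter,
              Finset.mem_powersetCard] at hb
            obtain ⟨a, ⟨⟨hsub, hcard⟩, hfib⟩, rfl⟩ := hb
            rw [Finset.mem_powersetCard]
            constructor
            · intro x hx
              rw [Finset.mem_sdiff, Finset.mem_range, not_lt] at hx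
              exact Finset.mem_filter.2 ⟨hsub hx.1, hx.2⟩
            · have : a \ Finset.range k = a \ (a ∩ Finset.range k) := by
                ext x; simp only [Finset.mem_sdiff, Finset.mem_inter]; tauto
              rw [this, Finset.card_sdiff_of_subset Finset.inter_subset_left, hfib, hcard]
          · intro b hb _
            exact Finset.prod_nonneg fun f hf =>
              hLnonneg f ((Finset.mem_powersetCard.1 hb).1 hf)
      _ ≤ S ^ (k - T.card) := esymm_le_pow w L hLnonneg (k - T.card)
  -- positivity facts
  have hsumpos : 0 < ∑ a ∈ (Finset.range n).powersetCard k, ∏ f ∈ a, w f := by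
    have hmem : Finset.range k ∈ (Finset.range n).powersetCard k :=
      Finset.mem_powersetCard.2 ⟨Finset.range_subset_range.2 hk, Finset.card_range k⟩
    apply Finset.sum_pos'
    · intro a ha
      exact Finset.prod_nonneg fun f hf => (hw f (Finset.mem_range.1
        ((Finset.mem_powersetCard.1 ha).1 hf))).le
    · exact ⟨Finset.range k, hmem, Finset.prod_pos hwk⟩
  have hprodpos : 0 < ∏ m ∈ Finset.range k, (w m + S) :=
    Finset.prod_pos fun m hm => by have := hwk m hm; linarith
  have hnum : 0 ≤ ∏ f ∈ Finset.range k, w f := (Finset.prod_pos hwk).le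
  rw [ge_iff_le, Finset.prod_div_distrib]
  exact div_le_div_of_nonneg_left hnum hsumpos key
end

section
/- Let F be a finite facility set, k ≤ |F|, and let the action set A be all k-subsets of F. Suppose cumulative relative scores satisfy z^t(a) ≤ −M − ηεt for all a ≠ a*, where z^t(a) = ∑_{f∈a} Y^t(f) − ∑_{f∈a*} Y^t(f) for some facility scores Y^t : F → ℝ scaled by η. Then the exponential-weights distribution ω^t(a) ∝ ∏_{f∈a} exp(Y^t(f)) satisfies ‖ω^t − δ_{a*}‖_1 ≤ 2 k |F| exp(−M − ηεt). -/
theorem exp_weights_L1_convergence {β : Type*} [DecidableEq β]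
    (F : Finset β) (k : ℕ) (hk : k ≤ F.card)
    (astar : Finset β) (hastar : astar ∈ F.powersetCard k)
    (Y : β → ℝ) (M η ε : ℝ) (t : ℕ)
    (hgap : ∀ a ∈ F.powersetCard k, a ≠ astar →
      (∑ f ∈ a, Y f) - (∑ f ∈ astar, Y f) ≤ -M - η * ε * t)
    (ω : Finset β → ℝ)
    (hω : ∀ a, ω a = Real.exp (∑ f ∈ a, Y f)
        / ∑ a' ∈ F.powersetCard k, Real.exp (∑ f ∈ a', Y f)) :
    ∑ a ∈ F.powersetCard k, |ω a - (if a = astar then (1 : ℝ) else 0)|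
      ≤ 2 * (k : ℝ) * (F.card : ℝ) * Real.exp (-M - η * ε * t) := by
  classical
  obtain ⟨hsub, hcard⟩ := Finset.mem_powersetCard.mp hastar
  obtain ⟨w, hw⟩ : ∃ w : Finset β → ℝ, ∀ a, w a = ∑ f ∈ a, Y f := ⟨_, fun _ => rfl⟩
  obtain ⟨S, hSdef⟩ : ∃ S : ℝ, S = ∑ a ∈ F.powersetCard k, Real.exp (w a) := ⟨_, rfl⟩
  obtain ⟨x, hx⟩ : ∃ x : ℝ, x = -M - η * ε * t := ⟨_, rfl⟩
  have hω' : ∀ a, ω a = Real.exp (w a) / S := by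
    intro a; rw [hω a, hw, hSdef]
    congr 1
    exact Finset.sum_congr rfl fun a' _ => by rw [hw]
  have hSpos : 0 < S := by
    rw [hSdef]
    exact Finset.sum_pos (fun a _ => Real.exp_pos _) ⟨astar, hastar⟩
  -- swap bound: for f ∈ F \ astar and g ∈ astar, Y f - Y g ≤ x
  have hswap : ∀ f ∈ F, f ∉ astar → ∀ g ∈ astar, Y f - Y g ≤ x := by
    intro f hfF hfna g hg
    have hkpos : 0 < k := hcard ▸ Finset.card_pos.mpr ⟨g, hg⟩
    have hfe : f ∉ astar.erase g := fun h => hfna (Finset.mem_of_mem_erase h)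
    have hb : insert f (astar.erase g) ∈ F.powersetCard k := by
      rw [Finset.mem_powersetCard]
      constructor
      · intro y hy
        rcases Finset.mem_insert.mp hy with rfl | hy
        · exact hfF
        · exact hsub (Finset.mem_of_mem_erase hy)
      · rw [Finset.card_insert_of_notMem hfe, Finset.card_erase_of_mem hg, hcard]
        omega
    have hne : insert f (astar.erase g) ≠ astar := fun h =>
      hfna (h ▸ Finset.mem_insert_self f _)
    have hgap' := hgap _ hb hne
    have hsum : ∑ f' ∈ insert f (astar.erase g), Y f'
        = Y f + ((∑ f' ∈ astar, Y f') - Y g) := by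
      rw [Finset.sum_insert hfe, Finset.sum_erase_eq_sub hg]
    rw [hsum] at hgap'
    rw [hx]
    linarith
  -- key bound on the mass of non-optimal actions
  obtain ⟨T, hTdef⟩ : ∃ T : ℝ,
      T = ∑ a ∈ (F.powersetCard k).erase astar, Real.exp (w a) := ⟨_, rfl⟩
  have hTnn : 0 ≤ T := by
    rw [hTdef]; exact Finset.sum_nonneg fun a _ => (Real.exp_pos _).le
  have key : T ≤ (k : ℝ) * F.card * Real.exp x * S := by
    have hex : ∀ a ∈ (F.powersetCard k).erase astar,
        ∃ p : β × β, p.1 ∈ a \ astar ∧ p.2 ∈ astar \ a := by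
      intro a ha
      obtain ⟨hane, haA⟩ := Finset.mem_erase.mp ha
      obtain ⟨hasub, hacard⟩ := Finset.mem_powersetCard.mp haA
      have h1 : (a \ astar).Nonempty := by
        rw [Finset.sdiff_nonempty]
        intro hss
        exact hane (Finset.eq_of_subset_of_card_le hss (by rw [hcard, hacard]))
      have h2 : (astar \ a).Nonempty := by
        rw [Finset.sdiff_nonempty]
        intro hss
        exact hane (Finset.eq_of_subset_of_card_le hss (by rw [hcard, hacard])).symm
      obtain ⟨f, hf⟩ := h1
      obtain ⟨g, hg⟩ := h2
      exact ⟨(f, g), hf, hg⟩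
    choose ps hp1 hp2 using hex
    obtain ⟨i, hidef⟩ : ∃ i : {a // a ∈ (F.powersetCard k).erase astar} → β × β × Finset β,
        ∀ p, i p = ((ps p.1 p.2).1, (ps p.1 p.2).2,
          insert (ps p.1 p.2).2 (p.1.erase (ps p.1 p.2).1)) := ⟨_, fun _ => rfl⟩
    have hfa : ∀ p : {a // a ∈ (F.powersetCard k).erase astar},
        (ps p.1 p.2).1 ∈ p.1 ∧ (ps p.1 p.2).1 ∉ astar :=
      fun p => ⟨(Finset.mem_sdiff.mp (hp1 p.1 p.2)).1, (Finset.mem_sdiff.mp (hp1 p.1 p.2)).2⟩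
    have hga : ∀ p : {a // a ∈ (F.powersetCard k).erase astar},
        (ps p.1 p.2).2 ∈ astar ∧ (ps p.1 p.2).2 ∉ p.1 :=
      fun p => ⟨(Finset.mem_sdiff.mp (hp2 p.1 p.2)).1, (Finset.mem_sdiff.mp (hp2 p.1 p.2)).2⟩
    have haA : ∀ p : {a // a ∈ (F.powersetCard k).erase astar}, p.1 ∈ F.powersetCard k :=
      fun p => (Finset.mem_erase.mp p.2).2
    have hmem : ∀ p : {a // a ∈ (F.powersetCard k).erase astar},
        i p ∈ (F \ astar) ×ˢ astar ×ˢ F.powersetCard k := by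
      intro p
      obtain ⟨hasub, hacard⟩ := Finset.mem_powersetCard.mp (haA p)
      rw [hidef]
      refine Finset.mem_product.mpr ⟨Finset.mem_sdiff.mpr ⟨hasub (hfa p).1, (hfa p).2⟩,
        Finset.mem_product.mpr ⟨(hga p).1, ?_⟩⟩
      have hkpos : 0 < k := hacard ▸ Finset.card_pos.mpr ⟨_, (hfa p).1⟩
      rw [Finset.mem_powersetCard]
      constructor
      · intro y hy
        rcases Finset.mem_insert.mp hy with rfl | hy
        · exact hsub (hga p).1
        · exact hasub (Finset.mem_of_mem_erase hy)
      · have hgnot : (ps p.1 p.2).2 ∉ p.1.erase (ps p.1 p.2).1 :=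
          fun h => (hga p).2 (Finset.mem_of_mem_erase h)
        rw [Finset.card_insert_of_notMem hgnot,
          Finset.card_erase_of_mem (hfa p).1, hacard]
        omega
    have hpt : ∀ p : {a // a ∈ (F.powersetCard k).erase astar},
        Real.exp (w p.1) ≤ Real.exp x * Real.exp (w (i p).2.2) := by
      intro p
      obtain ⟨hasub, _⟩ := Finset.mem_powersetCard.mp (haA p)
      have hgnot : (ps p.1 p.2).2 ∉ p.1.erase (ps p.1 p.2).1 :=
        fun h => (hga p).2 (Finset.mem_of_mem_erase h)
      have hw1 : w p.1 = Y (ps p.1 p.2).1 + ∑ f ∈ p.1.erase (ps p.1 p.2).1, Y f := by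
        rw [hw]
        exact (Finset.add_sum_erase _ _ (hfa p).1).symm
      have hw2 : w (i p).2.2 = Y (ps p.1 p.2).2 + ∑ f ∈ p.1.erase (ps p.1 p.2).1, Y f := by
        rw [hidef, hw]
        exact Finset.sum_insert hgnot
      have hsw := hswap _ (hasub (hfa p).1) (hfa p).2 _ (hga p).1
      rw [← Real.exp_add, Real.exp_le_exp, hw1, hw2]
      linarith
    have hinj : Function.Injective i := by
      intro p q hpq
      rw [hidef p, hidef q, Prod.mk.injEq, Prod.mk.injEq] at hpq
      obtain ⟨h1, h2, h3⟩ := hpq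
      have recov : ∀ r : {a // a ∈ (F.powersetCard k).erase astar},
          insert (ps r.1 r.2).1
            ((insert (ps r.1 r.2).2 (r.1.erase (ps r.1 r.2).1)).erase (ps r.1 r.2).2)
          = r.1 := by
        intro r
        have hgnot : (ps r.1 r.2).2 ∉ r.1.erase (ps r.1 r.2).1 :=
          fun h => (hga r).2 (Finset.mem_of_mem_erase h)
        rw [Finset.erase_insert hgnot, Finset.insert_erase (hfa r).1]
      have e1 := recov p
      rw [h3, h1, h2] at e1
      exact Subtype.ext (((recov q).symm.trans e1).symm)
    have h1 : T = ∑ p ∈ ((F.powersetCard k).erase astar).attach, Real.exp (w p.1) := by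
      rw [hTdef,
        ← Finset.sum_attach ((F.powersetCard k).erase astar) (fun a => Real.exp (w a))]
    have h2 : ∑ p ∈ ((F.powersetCard k).erase astar).attach, Real.exp (w p.1)
        ≤ ∑ p ∈ ((F.powersetCard k).erase astar).attach,
            Real.exp x * Real.exp (w (i p).2.2) :=
      Finset.sum_le_sum fun p _ => hpt p
    have h3 : ∑ p ∈ ((F.powersetCard k).erase astar).attach,
          Real.exp x * Real.exp (w (i p).2.2)
        = ∑ q ∈ ((F.powersetCard k).erase astar).attach.image i,
            Real.exp x * Real.exp (w q.2.2) := by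
      rw [Finset.sum_image (fun p _ q _ h => hinj h)]
    have h4 : ∑ q ∈ ((F.powersetCard k).erase astar).attach.image i,
          Real.exp x * Real.exp (w q.2.2)
        ≤ ∑ q ∈ (F \ astar) ×ˢ astar ×ˢ F.powersetCard k,
            Real.exp x * Real.exp (w q.2.2) := by
      apply Finset.sum_le_sum_of_subset_of_nonneg
      · intro q hq
        obtain ⟨p, _, rfl⟩ := Finset.mem_image.mp hq
        exact hmem p
      · intro q _ _
        exact mul_nonneg (Real.exp_pos _).le (Real.exp_pos _).le
    have h5 : ∑ q ∈ (F \ astar) ×ˢ astar ×ˢ F.powersetCard k,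
          Real.exp x * Real.exp (w q.2.2)
        = ((F \ astar).card : ℝ) * astar.card * (Real.exp x * S) := by
      rw [Finset.sum_product]
      have hin : ∀ f ∈ F \ astar,
          (∑ y ∈ astar ×ˢ F.powersetCard k, Real.exp x * Real.exp (w (f, y).2.2))
            = (astar.card : ℝ) * (Real.exp x * S) := by
        intro f _
        rw [Finset.sum_product]
        have hin2 : ∀ g ∈ astar,
            (∑ a' ∈ F.powersetCard k, Real.exp x * Real.exp (w (f, g, a').2.2))
              = Real.exp x * S := by
          intro g _
          rw [← Finset.mul_sum, hSdef]
        rw [Finset.sum_congr rfl hin2, Finset.sum_const, nsmul_eq_mul]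
      rw [Finset.sum_congr rfl hin, Finset.sum_const, nsmul_eq_mul]
      ring
    have hcards : ((F \ astar).card : ℝ) * astar.card ≤ (k : ℝ) * F.card := by
      rw [hcard]
      have hle : (F \ astar).card ≤ F.card := Finset.card_le_card Finset.sdiff_subset
      have hk0 : (0:ℝ) ≤ (k:ℝ) := Nat.cast_nonneg k
      calc ((F \ astar).card : ℝ) * k ≤ (F.card : ℝ) * k :=
            mul_le_mul_of_nonneg_right (by exact_mod_cast hle) hk0
        _ = (k : ℝ) * F.card := mul_comm _ _
    calc T ≤ ∑ q ∈ (F \ astar) ×ˢ astar ×ˢ F.powersetCard k,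
            Real.exp x * Real.exp (w q.2.2) := by
          rw [h1]; exact h2.trans ((le_of_eq h3).trans h4)
      _ = ((F \ astar).card : ℝ) * astar.card * (Real.exp x * S) := h5
      _ ≤ (k : ℝ) * F.card * (Real.exp x * S) :=
          mul_le_mul_of_nonneg_right hcards
            (mul_nonneg (Real.exp_pos x).le hSpos.le)
      _ = (k : ℝ) * F.card * Real.exp x * S :=
          (mul_assoc ((k : ℝ) * F.card) (Real.exp x) S).symm
  -- now compute the L1 distance
  have hSsplit : S = Real.exp (w astar) + T := by
    rw [hSdef, hTdef, ← Finset.add_sum_erase _ _ hastar]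
  have hωstar : ω astar = Real.exp (w astar) / S := hω' astar
  have hωle : ω astar ≤ 1 := by
    rw [hωstar, div_le_one hSpos, hSsplit]
    linarith [(Real.exp_pos (w astar)).le]
  have hL1 : ∑ a ∈ F.powersetCard k, |ω a - (if a = astar then (1 : ℝ) else 0)|
      = 2 * (T / S) := by
    rw [← Finset.add_sum_erase _ _ hastar]
    have hstar : |ω astar - (if astar = astar then (1:ℝ) else 0)| = 1 - ω astar := by
      rw [if_pos rfl, abs_sub_comm, abs_of_nonneg (by linarith)]
    have hrest : ∑ a ∈ (F.powersetCard k).erase astar,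
        |ω a - (if a = astar then (1:ℝ) else 0)| = T / S := by
      rw [hTdef, Finset.sum_div]
      apply Finset.sum_congr rfl
      intro a ha
      rw [if_neg (Finset.mem_erase.mp ha).1, sub_zero, hω' a,
        abs_of_nonneg (div_nonneg (Real.exp_pos _).le hSpos.le)]
    rw [hstar, hrest, hωstar, hSsplit]
    have hS0 : Real.exp (w astar) + T ≠ 0 := by
      rw [← hSsplit]; exact hSpos.ne'
    field_simp
    ring
  rw [hL1]
  have hfin : T / S ≤ (k : ℝ) * F.card * Real.exp x := by
    rw [div_le_iff₀ hSpos]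
    exact key
  calc 2 * (T / S) ≤ 2 * ((k : ℝ) * F.card * Real.exp x) := by linarith
    _ = 2 * (k : ℝ) * (F.card : ℝ) * Real.exp (-M - η * ε * t) := by rw [hx]; ring
end

section
/- Consider an n-player game that is (λ, μ)-smooth, i.e., there exists a joint action a* such that ∑_{i=1}^n r_i(a_i*, a_{-i}) ≥ λ·OPT − μ·W(a) for all joint actions a, where W(a) = ∑_i r_i(a) and OPT = max_a W(a). If each player i's sequence of mixed strategies ω^1,…,ω^T has individual regret at most R_i(T) = max_{ω_i} ∑_t (r_i(ω_i, ω_{-i}^t) − r_i(ω_i^t, ω_{-i}^t)), then (1/T) ∑_{t=1}^T W(ω^t) ≥ (λ/(1+μ))·OPT − (1/(T(1+μ))) ∑_{i=1}^n R_i(T). -/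
open Classical in
lemma dev_point {n : ℕ} {A : Fin n → Type*} [∀ i, Fintype (A i)]
    (r : Fin n → (∀ i, A i) → ℝ) (i : Fin n) (b0 : A i)
    (ω : ∀ j, A j → ℝ) (h1 : ∑ b, ω i b = 1) :
    (∑ a : ∀ j, A j,
      (∏ j, if h : j = i then (if (h ▸ a j) = b0 then (1:ℝ) else 0) else ω j (a j)) * r i a)
    = ∑ a : ∀ j, A j, (∏ j, ω j (a j)) * r i (Function.update a i b0) := by
  classical
  have hsub : ∀ (F : Fin n → ℝ), ∏ j ∈ ({i}ᶜ : Finset (Fin n)), F j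
      = ∏ j : {j // j ≠ i}, F (j : Fin n) := by
    intro F
    exact Finset.prod_subtype _ (by simp) _
  have hupd : ∀ (b : A i) (f : ∀ j : {j // j ≠ i}, A j),
      Function.update ((Equiv.piSplitAt i A).symm (b, f)) i b0 = (Equiv.piSplitAt i A).symm (b0, f) := by
    intro b f
    funext j
    by_cases h : j = i
    · subst h; simp [Function.update, Equiv.piSplitAt_symm_apply]
    · simp [Function.update, h, Equiv.piSplitAt_symm_apply]
  have lhs_eq : (∑ a : ∀ j, A j,
      (∏ j, if h : j = i then (if (h ▸ a j) = b0 then (1:ℝ) else 0) else ω j (a j)) * r i a)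
      = ∑ f : ∀ j : {j // j ≠ i}, A j,
          (∏ j : {j // j ≠ i}, ω j (f j)) * r i ((Equiv.piSplitAt i A).symm (b0, f)) := by
    rw [← Equiv.sum_comp (Equiv.piSplitAt i A).symm]
    rw [Fintype.sum_prod_type]
    have key : ∀ (b : A i) (f : ∀ j : {j // j ≠ i}, A j),
        (∏ j, if h : j = i then (if (h ▸ ((Equiv.piSplitAt i A).symm (b, f)) j) = b0 then (1:ℝ) else 0)
          else ω j (((Equiv.piSplitAt i A).symm (b, f)) j)) * r i ((Equiv.piSplitAt i A).symm (b, f))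
        = (if b = b0 then (1:ℝ) else 0) *
            ((∏ j : {j // j ≠ i}, ω j (f j)) * r i ((Equiv.piSplitAt i A).symm (b, f))) := by
      intro b f
      rw [Fintype.prod_eq_mul_prod_compl i, hsub]
      have h1' : (if h : i = i then (if (h ▸ ((Equiv.piSplitAt i A).symm (b, f)) i) = b0 then (1:ℝ) else 0)
          else ω i (((Equiv.piSplitAt i A).symm (b, f)) i)) = (if b = b0 then (1:ℝ) else 0) := by
        simp [Equiv.piSplitAt_symm_apply]
      have h2' : ∀ j : {j // j ≠ i},
          (if h : (j : Fin n) = i then (if (h ▸ ((Equiv.piSplitAt i A).symm (b, f)) j) = b0 then (1:ℝ) else 0)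
            else ω j (((Equiv.piSplitAt i A).symm (b, f)) j)) = ω j (f j) := by
        intro j
        rw [dif_neg j.2]
        simp [Equiv.piSplitAt_symm_apply, j.2]
      rw [h1', Finset.prod_congr rfl fun j _ => h2' j]
      ring
    simp_rw [key, ite_mul, one_mul, zero_mul]
    rw [Finset.sum_comm]
    simp
  have rhs_eq : (∑ a : ∀ j, A j, (∏ j, ω j (a j)) * r i (Function.update a i b0))
      = ∑ f : ∀ j : {j // j ≠ i}, A j,
          (∏ j : {j // j ≠ i}, ω j (f j)) * r i ((Equiv.piSplitAt i A).symm (b0, f)) := by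
    rw [← Equiv.sum_comp (Equiv.piSplitAt i A).symm]
    rw [Fintype.sum_prod_type]
    have key : ∀ (b : A i) (f : ∀ j : {j // j ≠ i}, A j),
        (∏ j, ω j (((Equiv.piSplitAt i A).symm (b, f)) j)) * r i (Function.update ((Equiv.piSplitAt i A).symm (b, f)) i b0)
        = ω i b * ((∏ j : {j // j ≠ i}, ω j (f j)) * r i ((Equiv.piSplitAt i A).symm (b0, f))) := by
      intro b f
      rw [hupd, Fintype.prod_eq_mul_prod_compl i, hsub]
      have h1' : ((Equiv.piSplitAt i A).symm (b, f)) i = b := by simp [Equiv.piSplitAt_symm_apply]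
      have h2' : ∀ j : {j // j ≠ i}, ω j (((Equiv.piSplitAt i A).symm (b, f)) j) = ω j (f j) := by
        intro j
        simp [Equiv.piSplitAt_symm_apply, j.2]
      rw [h1', Finset.prod_congr rfl fun j _ => h2' j]
      ring
    simp_rw [key]
    rw [Finset.sum_comm]
    simp_rw [← Finset.sum_mul, h1, one_mul]
  rw [lhs_eq, rhs_eq]

/-- Expected reward of player `i` under a mixed profile `ω`, with player `i`'s
strategy replaced by the mixed strategy `σ`. -/
noncomputable def devReward {n : ℕ} {A : Fin n → Type*} [∀ i, Fintype (A i)]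
    [DecidableEq (Fin n)] (r : Fin n → (∀ i, A i) → ℝ) (i : Fin n)
    (σ : A i → ℝ) (ω : ∀ j, A j → ℝ) : ℝ :=
  ∑ a : ∀ j, A j,
    (∏ j, if h : j = i then σ (h ▸ a j) else ω j (a j)) * r i a

/-- Expected reward of player `i` under the mixed profile `ω`. -/
noncomputable def mixReward {n : ℕ} {A : Fin n → Type*} [∀ i, Fintype (A i)]
    (r : Fin n → (∀ i, A i) → ℝ) (i : Fin n) (ω : ∀ j, A j → ℝ) : ℝ :=
  ∑ a : ∀ j, A j, (∏ j, ω j (a j)) * r i a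

theorem smooth_game_welfare_bound {n : ℕ} {A : Fin n → Type*}
    [∀ i, Fintype (A i)] [∀ i, Nonempty (A i)]
    (r : Fin n → (∀ i, A i) → ℝ)
    (lam mu OPT : ℝ) (hlam : 0 ≤ lam) (hmu : 0 ≤ mu)
    (hOPT : IsGreatest (Set.range fun a : ∀ i, A i => ∑ i, r i a) OPT)
    (astar : ∀ i, A i)
    (hsmooth : ∀ a : ∀ i, A i,
      ∑ i, r i (Function.update a i (astar i)) ≥ lam * OPT - mu * ∑ i, r i a)
    (T : ℕ) (hT : 1 ≤ T)
    (ω : ℕ → ∀ i, A i → ℝ)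
    (hω0 : ∀ t i a, 0 ≤ ω t i a) (hω1 : ∀ t i, ∑ a, ω t i a = 1)
    (R : Fin n → ℝ)
    (hreg : ∀ i, ∀ σ : A i → ℝ, (∀ b, 0 ≤ σ b) → (∑ b, σ b = 1) →
      ∑ t ∈ Finset.range T,
          (devReward r i σ (ω t) - mixReward r i (ω t)) ≤ R i) :
    (1 / (T : ℝ)) * ∑ t ∈ Finset.range T, ∑ i, mixReward r i (ω t)
      ≥ (lam / (1 + mu)) * OPT - (1 / ((T : ℝ) * (1 + mu))) * ∑ i, R i := by
  classical
  have hμ1 : (0:ℝ) < 1 + mu := by linarith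
  have hT0 : (0:ℝ) < T := by exact_mod_cast hT
  set S := ∑ t ∈ Finset.range T, ∑ i, mixReward r i (ω t) with hS
  set σ : ∀ i, A i → ℝ := fun i b => if b = astar i then 1 else 0 with hσ
  have hσ0 : ∀ i b, 0 ≤ σ i b := by
    intro i b; rw [hσ]; dsimp only; split_ifs <;> norm_num
  have hσ1 : ∀ i, ∑ b, σ i b = 1 := by
    intro i; rw [hσ]; simp
  -- per-step smoothness bound
  have hstep : ∀ t, lam * OPT - mu * (∑ i, mixReward r i (ω t)) ≤
      ∑ i, devReward r i (σ i) (ω t) := by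
    intro t
    have hdev : ∀ i, devReward r i (σ i) (ω t)
        = ∑ a : ∀ j, A j, (∏ j, ω t j (a j)) * r i (Function.update a i (astar i)) :=
      fun i => dev_point r i (astar i) (ω t) (hω1 t i)
    have hsum1 : ∑ a : ∀ j, A j, ∏ j, ω t j (a j) = 1 := by
      rw [← Fintype.prod_sum]
      simp [hω1 t]
    have e1 : ∑ a : ∀ j, A j, (∏ j, ω t j (a j)) * (lam * OPT - mu * ∑ i, r i a)
        = (∑ a : ∀ j, A j, ∏ j, ω t j (a j)) * (lam * OPT)
          - mu * ∑ a : ∀ j, A j, (∏ j, ω t j (a j)) * ∑ i, r i a := by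
      rw [Finset.sum_congr rfl (fun a _ => by ring :
        ∀ a ∈ (Finset.univ : Finset (∀ j, A j)),
          (∏ j, ω t j (a j)) * (lam * OPT - mu * ∑ i, r i a)
          = (∏ j, ω t j (a j)) * (lam * OPT) - mu * ((∏ j, ω t j (a j)) * ∑ i, r i a)),
        Finset.sum_sub_distrib, ← Finset.sum_mul, ← Finset.mul_sum]
    have e2 : ∑ a : ∀ j, A j, (∏ j, ω t j (a j)) * ∑ i, r i a
        = ∑ i, mixReward r i (ω t) := by
      simp_rw [Finset.mul_sum]
      rw [Finset.sum_comm]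
      rfl
    have e3 : ∑ i, devReward r i (σ i) (ω t)
        = ∑ a : ∀ j, A j, (∏ j, ω t j (a j)) * ∑ i, r i (Function.update a i (astar i)) := by
      rw [Finset.sum_congr rfl (fun i _ => hdev i), Finset.sum_comm]
      simp_rw [Finset.mul_sum]
    have hle : ∑ a : ∀ j, A j, (∏ j, ω t j (a j)) * (lam * OPT - mu * ∑ i, r i a)
        ≤ ∑ a : ∀ j, A j, (∏ j, ω t j (a j)) * ∑ i, r i (Function.update a i (astar i)) := by
      apply Finset.sum_le_sum
      intro a _
      exact mul_le_mul_of_nonneg_left (hsmooth a)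
        (Finset.prod_nonneg fun j _ => hω0 t j (a j))
    rw [e1, e2, hsum1, one_mul] at hle
    rw [e3]
    exact hle
  -- regret bound per player
  have hR : ∀ i, ∑ t ∈ Finset.range T, devReward r i (σ i) (ω t)
      ≤ R i + ∑ t ∈ Finset.range T, mixReward r i (ω t) := by
    intro i
    have := hreg i (σ i) (hσ0 i) (hσ1 i)
    rw [Finset.sum_sub_distrib] at this
    linarith
  -- combine
  have big : (T : ℝ) * (lam * OPT) - mu * S ≤ S + ∑ i, R i := by
    have h1 : (T : ℝ) * (lam * OPT) - mu * S
        ≤ ∑ t ∈ Finset.range T, ∑ i, devReward r i (σ i) (ω t) := by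
      have := Finset.sum_le_sum (fun t (_ : t ∈ Finset.range T) => hstep t)
      rw [Finset.sum_sub_distrib, Finset.sum_const, Finset.card_range,
        ← Finset.mul_sum] at this
      simpa [nsmul_eq_mul, hS] using this
    have h2 : ∑ t ∈ Finset.range T, ∑ i, devReward r i (σ i) (ω t)
        ≤ ∑ i, R i + S := by
      rw [Finset.sum_comm, hS, Finset.sum_comm (s := Finset.range T)]
      rw [← Finset.sum_add_distrib]
      exact Finset.sum_le_sum fun i _ => hR i
    linarith
  -- final arithmetic
  rw [ge_iff_le, ← sub_nonneg]
  have hkey : (1 / (T : ℝ)) * S - ((lam / (1 + mu)) * OPT - (1 / ((T : ℝ) * (1 + mu))) * ∑ i, R i)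
      = ((1 + mu) * S - ((T : ℝ) * (lam * OPT) - ∑ i, R i)) / ((T : ℝ) * (1 + mu)) := by
    field_simp
  rw [hkey]
  apply div_nonneg
  · linarith
  · positivity
end
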